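/- Let p ∈ (0,∞), X ∈ L^p(ℝ^d) with law μ not a Dirac mass, and let (a_N) be an L^p-optimal greedy quantization sequence. Suppose there exist b ∈ (0,1/2) and a constant C̃ > 0 such that for all N and all ξ ∈ ℝ^d, e_p(a^{(N)}∪{ξ}, X)^p ≤ e_p(a^{(N)}, X)^p - (1/C̃)·Ψ_b(ξ)^{-1}·d(ξ, a^{(N)})^{p+d}, where Ψ_b ∈ L^{p/(p+d)}(μ). Then limsup_N N^{1/d} e_p(a^{(N)}, X) < ∞. -/
import Mathlib


open MeasureTheory Metric

/-- The grid `{a 1, ..., a N}` formed by the first `N` terms of the sequence `a`. -/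
def grid {E : Type*} (a : ℕ → E) (N : ℕ) : Set E := a '' Set.Icc 1 N

/-- `a` is an `L^p`-optimal greedy quantization sequence for `X`. -/
def IsGreedy {E : Type*} [NormedAddCommGroup E] [MeasurableSpace E]
    {Ω : Type*} [MeasurableSpace Ω] (P : Measure Ω) (X : Ω → E) (p : ℝ) (a : ℕ → E) : Prop :=
  ∀ N : ℕ, ∀ ξ : E,
    ∫ ω, infDist (X ω) (insert (a (N + 1)) (grid a N)) ^ p ∂P
      ≤ ∫ ω, infDist (X ω) (insert ξ (grid a N)) ^ p ∂P


lemma bern_aux {x α : ℝ} (hα : 0 < α) (hx0 : 0 ≤ x) (hx1 : x < 1) :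
    1 + α * x ≤ (1 - x) ^ (-α) := by
  have h1 : (0:ℝ) < 1 - x := by linarith
  rw [Real.rpow_def_of_pos h1]
  have hlog : Real.log (1 - x) ≤ -x := by
    have := Real.log_le_sub_one_of_pos h1; linarith
  calc 1 + α * x ≤ Real.exp (α * x) := by
        have := Real.add_one_le_exp (α * x); linarith
    _ ≤ _ := Real.exp_le_exp.mpr (by nlinarith)

lemma rec_aux {α c : ℝ} (hα : 0 < α) (hc : 0 < c) {A : ℕ → ℝ}
    (hA : ∀ N, 1 ≤ N → 0 ≤ A N)
    (hrec : ∀ N, 1 ≤ N → A (N + 1) + c * A N ^ (1 + α) ≤ A N) :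
    ∀ N, 1 ≤ N → A N ^ α * (min 1 α * c * N) ≤ 1 := by
  set c₀ := min 1 α * c with hc₀def
  have hc₀pos : 0 < c₀ := mul_pos (lt_min one_pos hα) hc
  have hc₀c : c₀ ≤ c := by
    have : min 1 α ≤ 1 := min_le_left _ _
    nlinarith
  have hc₀α : c₀ ≤ α * c := by
    have : min 1 α ≤ α := min_le_right _ _
    nlinarith
  intro N hN
  induction N with
  | zero => omega
  | succ n ih =>
    rcases Nat.eq_or_lt_of_le hN with h1 | h2
    · -- base case n + 1 = 1, i.e. n = 0
      have hn0 : n = 0 := by omega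
      subst hn0
      have h := hrec 1 le_rfl
      have h2 : 0 ≤ A 2 := hA 2 (by omega)
      have hA1 : 0 ≤ A 1 := hA 1 le_rfl
      have hsplit : A 1 ^ (1 + α) = A 1 * A 1 ^ α := by
        rw [Real.rpow_add' hA1 (by positivity), Real.rpow_one]
      rw [hsplit] at h
      rcases hA1.eq_or_lt with h0 | h0
      · rw [← h0, Real.zero_rpow hα.ne']
        simp
      · have hcA : c * A 1 ^ α ≤ 1 := by
          have hAα : 0 ≤ A 1 ^ α := Real.rpow_nonneg hA1 α
          nlinarith
        have hAα : 0 ≤ A 1 ^ α := Real.rpow_nonneg hA1 α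
        push_cast
        nlinarith
    · -- inductive step: n ≥ 1
      have hn1 : 1 ≤ n := by omega
      have ihn := ih hn1
      have hAn1 : 0 ≤ A (n + 1) := hA (n + 1) (by omega)
      rcases hAn1.eq_or_lt with h0 | h0
      · rw [← h0, Real.zero_rpow hα.ne']
        simp
      · have h := hrec n hn1
        have hAn0 : 0 ≤ A n := hA n hn1
        have hAnn : 0 ≤ c * A n ^ (1 + α) := by positivity
        have hAn : 0 < A n := lt_of_lt_of_le h0 (by linarith)
        have hsplit : A n ^ (1 + α) = A n * A n ^ α := by
          rw [Real.rpow_add hAn, Real.rpow_one]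
        rw [hsplit] at h
        set x := c * A n ^ α with hxdef
        have hx0 : 0 < x := by positivity
        have hkey : A (n + 1) ≤ A n * (1 - x) := by nlinarith
        have hx1 : x < 1 := by nlinarith
        -- Bernoulli
        have hbern := bern_aux hα hx0.le hx1
        -- A (n+1) ^ (-α) ≥ (A n * (1 - x)) ^ (-α)
        have hmono : (A n * (1 - x)) ^ (-α) ≤ A (n + 1) ^ (-α) :=
          Real.rpow_le_rpow_of_nonpos h0 hkey (by linarith)
        have hmul : (A n * (1 - x)) ^ (-α) = A n ^ (-α) * (1 - x) ^ (-α) :=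
          Real.mul_rpow hAn.le (by linarith)
        have hAnα : 0 < A n ^ α := Real.rpow_pos_of_pos hAn α
        have hAninv : A n ^ (-α) = (A n ^ α)⁻¹ := Real.rpow_neg hAn.le α
        -- from ih : A n ^ α * (c₀ * n) ≤ 1, so c₀ * n ≤ (A n ^ α)⁻¹
        have hinv : A n ^ α * (A n ^ α)⁻¹ = 1 := mul_inv_cancel₀ hAnα.ne'
        have hinv0 : 0 ≤ (A n ^ α)⁻¹ := by positivity
        have hB : c₀ * n ≤ (A n ^ α)⁻¹ := by nlinarith
        have hstep : (A n ^ α)⁻¹ * (1 + α * x) = (A n ^ α)⁻¹ + α * c := by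
          field_simp [hxdef]
          ring
        have hchain : c₀ * (↑n + 1) ≤ A (n + 1) ^ (-α) := by
          have h1 : (A n ^ α)⁻¹ * (1 + α * x) ≤ A n ^ (-α) * (1 - x) ^ (-α) := by
            rw [hAninv]
            exact mul_le_mul_of_nonneg_left hbern hinv0
          have h2 : c₀ * (↑n + 1) ≤ (A n ^ α)⁻¹ * (1 + α * x) := by
            rw [hstep]; linarith
          calc c₀ * (↑n + 1) ≤ (A n ^ α)⁻¹ * (1 + α * x) := h2
            _ ≤ A n ^ (-α) * (1 - x) ^ (-α) := h1
            _ ≤ A (n + 1) ^ (-α) := by rw [← hmul]; exact hmono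
        have hfin : A (n + 1) ^ α * A (n + 1) ^ (-α) = 1 := by
          rw [← Real.rpow_add h0]; simp
        have hAn1α : 0 ≤ A (n + 1) ^ α := Real.rpow_nonneg hAn1 α
        calc A (n + 1) ^ α * (c₀ * ↑(n + 1)) ≤ A (n + 1) ^ α * A (n + 1) ^ (-α) := by
              apply mul_le_mul_of_nonneg_left _ hAn1α
              push_cast at hchain ⊢; exact hchain
          _ = 1 := hfin

lemma infdist_insert_aux {E : Type*} [NormedAddCommGroup E] {s : Set E} (hs : s.Nonempty)
    (x y : E) : infDist x (insert y s) = min (infDist x s) ‖x - y‖ := by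
  rw [infDist, ← Set.singleton_union, EMetric.infEdist_union, EMetric.infEdist_singleton,
    ENNReal.toReal_min (edist_ne_top x y) (infEdist_ne_top hs), min_comm]
  congr 1
  rw [← dist_edist, dist_eq_norm]

lemma grid_succ_aux {E : Type*} (a : ℕ → E) (N : ℕ) :
    grid a (N + 1) = insert (a (N + 1)) (grid a N) := by
  unfold grid
  rw [show Set.Icc 1 (N + 1) = insert (N + 1) (Set.Icc 1 N) by
    ext m; simp only [Set.mem_Icc, Set.mem_insert_iff]; omega]
  rw [Set.image_insert_eq]

theorem stmt_8 {d : ℕ} (hd : 0 < d) {E : Type*} [NormedAddCommGroup E] [NormedSpace ℝ E]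
    [FiniteDimensional ℝ E] (hdim : Module.finrank ℝ E = d)
    [MeasurableSpace E] [BorelSpace E]
    {Ω : Type*} [MeasurableSpace Ω] (P : Measure Ω) [IsProbabilityMeasure P]
    (X : Ω → E) (hX : Measurable X) (p : ℝ) (hp : 0 < p)
    (hLp : Integrable (fun ω => ‖X ω‖ ^ p) P)
    (hnotdirac : ∀ x : E, Measure.map X P ≠ Measure.dirac x)
    (a : ℕ → E) (ha : IsGreedy P X p a)
    (b : ℝ) (hb : b ∈ Set.Ioo (0 : ℝ) (1 / 2))
    (Ψ : E → ℝ) (hΨpos : ∀ ξ, 0 < Ψ ξ)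
    (Ctil : ℝ) (hCtil : 0 < Ctil)
    (hmicro : ∀ N : ℕ, 1 ≤ N → ∀ ξ : E,
      ∫ ω, (min (infDist (X ω) (grid a N)) ‖X ω - ξ‖) ^ p ∂P
        ≤ ∫ ω, infDist (X ω) (grid a N) ^ p ∂P
          - (1 / Ctil) * (Ψ ξ)⁻¹ * infDist ξ (grid a N) ^ (p + d))
    (hΨint : Integrable (fun ξ => Ψ ξ ^ (p / (p + d))) (Measure.map X P)) :
    ∃ C : ℝ, ∀ N : ℕ, 1 ≤ N →
      (N : ℝ) ^ ((1 : ℝ) / d) * (∫ ω, infDist (X ω) (grid a N) ^ p ∂P) ^ (1 / p) ≤ C := by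
  classical
  set μ := Measure.map X P with hμdef
  haveI : IsProbabilityMeasure μ := Measure.isProbabilityMeasure_map hX.aemeasurable
  have hd' : (0:ℝ) < d := by exact_mod_cast hd
  have hpd : (0:ℝ) < p + d := by linarith
  set q : ℝ := p / (p + d) with hqdef
  have hq : 0 < q := div_pos hp hpd
  set A : ℕ → ℝ := fun N => ∫ ω, infDist (X ω) (grid a N) ^ p ∂P with hAdef
  have hArfl : ∀ N, A N = ∫ ω, infDist (X ω) (grid a N) ^ p ∂P := fun N => rfl
  have hA0 : ∀ N, 0 ≤ A N :=
    fun N => integral_nonneg fun ω => Real.rpow_nonneg infDist_nonneg p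
  have hne : ∀ N, 1 ≤ N → (grid a N).Nonempty := fun N hN => ⟨a 1, 1, ⟨le_rfl, hN⟩, rfl⟩
  set K : ℝ := ∫ ξ, Ψ ξ ^ q ∂μ with hKdef
  have hK : 0 < K := by
    rw [hKdef]
    rw [integral_pos_iff_support_of_nonneg
      (fun ξ => Real.rpow_nonneg (hΨpos ξ).le q) hΨint]
    have hsupp : Function.support (fun ξ => Ψ ξ ^ q) = Set.univ := by
      ext ξ
      simp [Function.mem_support, (Real.rpow_pos_of_pos (hΨpos ξ) q).ne']
    rw [hsupp]
    simp
  -- key pointwise inequality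
  have h1 : ∀ N, 1 ≤ N → ∀ ξ : E,
      (1 / Ctil) * (Ψ ξ)⁻¹ * infDist ξ (grid a N) ^ (p + d) ≤ A N - A (N + 1) := by
    intro N hN ξ
    have hm := hmicro N hN ξ
    have step : A (N + 1) ≤ ∫ ω, (min (infDist (X ω) (grid a N)) ‖X ω - ξ‖) ^ p ∂P := by
      calc A (N + 1) = ∫ ω, infDist (X ω) (insert (a (N + 1)) (grid a N)) ^ p ∂P := by
            rw [hArfl (N + 1), grid_succ_aux]
        _ ≤ ∫ ω, infDist (X ω) (insert ξ (grid a N)) ^ p ∂P := ha N ξ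
        _ = ∫ ω, (min (infDist (X ω) (grid a N)) ‖X ω - ξ‖) ^ p ∂P := by
            simp only [infdist_insert_aux (hne N hN)]
    rw [← hArfl N] at hm
    linarith
  have hD0 : ∀ N, 1 ≤ N → 0 ≤ A N - A (N + 1) := by
    intro N hN
    have h := h1 N hN (a 1)
    have hpos : 0 ≤ (1 / Ctil) * (Ψ (a 1))⁻¹ * infDist (a 1) (grid a N) ^ (p + ↑d) :=
      mul_nonneg (mul_nonneg (by positivity) (inv_nonneg.mpr (hΨpos _).le))
        (Real.rpow_nonneg infDist_nonneg _)
    linarith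
  -- change of variables
  have hchg : ∀ N, A N = ∫ ξ, infDist ξ (grid a N) ^ p ∂μ := by
    intro N
    rw [hArfl N, hμdef]
    exact (integral_map hX.aemeasurable
      (((continuous_infDist_pt _).rpow_const
        (fun x => Or.inr hp.le)).aestronglyMeasurable)).symm
  -- macro inequality
  have hmain : ∀ N, 1 ≤ N → A N ≤ Ctil ^ q * (A N - A (N + 1)) ^ q * K := by
    intro N hN
    have hDN := hD0 N hN
    have hpt : ∀ ξ, infDist ξ (grid a N) ^ p
        ≤ Ctil ^ q * (A N - A (N + 1)) ^ q * Ψ ξ ^ q := by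
      intro ξ
      have h := h1 N hN ξ
      have hr : (0:ℝ) ≤ infDist ξ (grid a N) := infDist_nonneg
      have hΨ := hΨpos ξ
      have h2 : infDist ξ (grid a N) ^ (p + ↑d) ≤ Ctil * Ψ ξ * (A N - A (N + 1)) := by
        have e : infDist ξ (grid a N) ^ (p + ↑d)
            = Ctil * Ψ ξ * ((1 / Ctil) * (Ψ ξ)⁻¹ * infDist ξ (grid a N) ^ (p + ↑d)) := by
          field_simp
        rw [e]
        exact mul_le_mul_of_nonneg_left h (by positivity)
      have h3 : (infDist ξ (grid a N) ^ (p + ↑d)) ^ q ≤ (Ctil * Ψ ξ * (A N - A (N + 1))) ^ q :=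
        Real.rpow_le_rpow (Real.rpow_nonneg hr _) h2 hq.le
      have h4 : (infDist ξ (grid a N) ^ (p + ↑d)) ^ q = infDist ξ (grid a N) ^ p := by
        rw [← Real.rpow_mul hr]
        congr 1
        rw [hqdef]
        field_simp
      have h5 : (Ctil * Ψ ξ * (A N - A (N + 1))) ^ q
          = Ctil ^ q * Ψ ξ ^ q * (A N - A (N + 1)) ^ q := by
        rw [Real.mul_rpow (by positivity) hDN, Real.mul_rpow hCtil.le hΨ.le]
      calc infDist ξ (grid a N) ^ p = (infDist ξ (grid a N) ^ (p + ↑d)) ^ q := h4.symm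
        _ ≤ (Ctil * Ψ ξ * (A N - A (N + 1))) ^ q := h3
        _ = Ctil ^ q * (A N - A (N + 1)) ^ q * Ψ ξ ^ q := by rw [h5]; ring
    calc A N = ∫ ξ, infDist ξ (grid a N) ^ p ∂μ := hchg N
      _ ≤ ∫ ξ, Ctil ^ q * (A N - A (N + 1)) ^ q * Ψ ξ ^ q ∂μ := by
          apply integral_mono_of_nonneg
          · exact Filter.Eventually.of_forall fun ξ => Real.rpow_nonneg infDist_nonneg p
          · exact hΨint.const_mul _
          · exact Filter.Eventually.of_forall hpt
      _ = Ctil ^ q * (A N - A (N + 1)) ^ q * K := by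
          rw [hKdef, ← integral_const_mul]
  -- set up recursion
  set M : ℝ := Ctil ^ q * K with hMdef
  have hM : 0 < M := mul_pos (Real.rpow_pos_of_pos hCtil q) hK
  set α : ℝ := (d : ℝ) / p with hαdef
  have hα : 0 < α := div_pos hd' hp
  set c : ℝ := (M ^ ((1:ℝ) / q))⁻¹ with hcdef
  have hc : 0 < c := by
    rw [hcdef]
    exact inv_pos.mpr (Real.rpow_pos_of_pos hM _)
  have h1q : (1:ℝ) / q = 1 + α := by
    rw [hqdef, hαdef]
    field_simp
  have hrec : ∀ N, 1 ≤ N → A (N + 1) + c * A N ^ (1 + α) ≤ A N := by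
    intro N hN
    have h := hmain N hN
    have hDN := hD0 N hN
    have h2 : A N / M ≤ (A N - A (N + 1)) ^ q := by
      rw [div_le_iff₀ hM]
      calc A N ≤ Ctil ^ q * (A N - A (N + 1)) ^ q * K := h
        _ = (A N - A (N + 1)) ^ q * M := by rw [hMdef]; ring
    have h3 : (A N / M) ^ ((1:ℝ) / q) ≤ ((A N - A (N + 1)) ^ q) ^ ((1:ℝ) / q) :=
      Real.rpow_le_rpow (div_nonneg (hA0 N) hM.le) h2 (one_div_pos.mpr hq).le
    have h4 : ((A N - A (N + 1)) ^ q) ^ ((1:ℝ) / q) = A N - A (N + 1) := by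
      rw [← Real.rpow_mul hDN, mul_one_div_cancel hq.ne', Real.rpow_one]
    have h5 : (A N / M) ^ ((1:ℝ) / q) = A N ^ (1 + α) * c := by
      rw [Real.div_rpow (hA0 N) hM.le, div_eq_mul_inv, hcdef, h1q]
    rw [h4, h5] at h3
    linarith
  have hrecres := rec_aux hα hc (fun N _ => hA0 N) hrec
  set c₀ : ℝ := min 1 α * c with hc₀def
  have hc₀ : 0 < c₀ := mul_pos (lt_min one_pos hα) hc
  refine ⟨c₀ ^ (-(1 / (d : ℝ))), ?_⟩
  intro N hN
  have hres := hrecres N hN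
  have hNpos : (0:ℝ) < N := by exact_mod_cast hN
  have hc₀N : 0 < c₀ * N := by positivity
  have hAα : A N ^ α ≤ (c₀ * N)⁻¹ := by
    rw [← one_div, le_div_iff₀ hc₀N]
    linarith [hres]
  have e1 : A N ^ (1 / p) = (A N ^ α) ^ ((1:ℝ) / d) := by
    rw [← Real.rpow_mul (hA0 N)]
    congr 1
    rw [hαdef]
    field_simp
  have e2 : (A N ^ α) ^ ((1:ℝ) / d) ≤ ((c₀ * N)⁻¹) ^ ((1:ℝ) / d) :=
    Real.rpow_le_rpow (Real.rpow_nonneg (hA0 N) α) hAα (by positivity)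
  have e3 : ((c₀ * N)⁻¹) ^ ((1:ℝ) / d) = c₀ ^ (-(1 / (d:ℝ))) * (N:ℝ) ^ (-(1 / (d:ℝ))) := by
    rw [Real.inv_rpow hc₀N.le, ← Real.rpow_neg hc₀N.le,
      Real.mul_rpow hc₀.le hNpos.le]
  have e4 : A N ^ (1 / p) ≤ c₀ ^ (-(1 / (d:ℝ))) * (N:ℝ) ^ (-(1 / (d:ℝ))) := by
    rw [e1, ← e3]; exact e2
  have hNd : (0:ℝ) ≤ (N:ℝ) ^ ((1:ℝ) / d) := Real.rpow_nonneg hNpos.le _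
  calc (N:ℝ) ^ ((1:ℝ) / d) * A N ^ (1 / p)
      ≤ (N:ℝ) ^ ((1:ℝ) / d) * (c₀ ^ (-(1 / (d:ℝ))) * (N:ℝ) ^ (-(1 / (d:ℝ)))) :=
        mul_le_mul_of_nonneg_left e4 hNd
    _ = c₀ ^ (-(1 / (d:ℝ))) * ((N:ℝ) ^ ((1:ℝ) / d) * (N:ℝ) ^ (-(1 / (d:ℝ)))) := by ring
    _ = c₀ ^ (-(1 / (d:ℝ))) := by
        rw [← Real.rpow_add hNpos]
        simp
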